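/- For every signal x ∈ ℂ^{nd}, the quadratic form of the (unnormalized) Directed Sheaf Hypergraph Laplacian satisfies x† L x = (1/2) Σ_{e∈E} (1/δ_e) Σ_{u,v∈e, u≠v} ‖ F⃗_{u⊴e} x_u − F⃗_{v⊴e} x_v ‖₂², where x_u ∈ ℂ^d denotes the block of x indexed by vertex u; in particular L is Hermitian and positive semidefinite. -/

import Mathlib

open Matrix Complex Finset
open scoped ComplexOrder

noncomputable section

variable {V E : Type*} [Fintype V] [DecidableEq V] [Fintype E] [DecidableEq E] {d : ℕ}

/-- The vertex set of a hyperedge `e`: the union of its tail set `T e` and head set `Hd e`. -/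
def everts (T Hd : E → Finset V) (e : E) : Finset V := T e ∪ Hd e

/-- The degree `δ_e` of a hyperedge. -/
def edeg (T Hd : E → Finset V) (e : E) : ℕ := (everts T Hd e).card

/-- The directional scalar `S^{(q)}_{u ⊴ e}`. -/
def dirS (T Hd : E → Finset V) (q : ℝ) (e : E) (u : V) : ℂ :=
  if u ∈ Hd e then 1
  else if u ∈ T e then Complex.exp (-(2 * Real.pi * q) * Complex.I)
  else 0

/-- The complex restriction map `F⃗_{u ⊴ e} = S^{(q)}_{u ⊴ e} • F_{u ⊴ e}`. -/
def Fdir (T Hd : E → Finset V) (q : ℝ) (F : V → E → Matrix (Fin d) (Fin d) ℝ)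
    (u : V) (e : E) : Matrix (Fin d) (Fin d) ℂ :=
  dirS T Hd q e u • (F u e).map (fun a => (a : ℂ))

/-- The block incidence matrix `B^{(q)} ∈ ℂ^{md × nd}`. -/
def Bmat (T Hd : E → Finset V) (q : ℝ) (F : V → E → Matrix (Fin d) (Fin d) ℝ) :
    Matrix (E × Fin d) (V × Fin d) ℂ :=
  Matrix.of fun p r =>
    if r.1 ∈ everts T Hd p.1 then Fdir T Hd q F r.1 p.1 p.2 r.2 else 0

/-- The block diagonal matrix `D_E^{-1}`, with blocks `δ_e⁻¹ • I_d`. -/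
def DEinv (T Hd : E → Finset V) (d : ℕ) : Matrix (E × Fin d) (E × Fin d) ℂ :=
  Matrix.diagonal fun p => ((edeg T Hd p.1 : ℂ))⁻¹

/-- The node degree block `D_u = Σ_{e : u ∈ e} F_{u⊴e}ᵀ F_{u⊴e}`. -/
def Dblk (T Hd : E → Finset V) (F : V → E → Matrix (Fin d) (Fin d) ℝ) (u : V) :
    Matrix (Fin d) (Fin d) ℝ :=
  ∑ e ∈ Finset.univ.filter (fun e => u ∈ everts T Hd e), (F u e)ᵀ * F u e

/-- The block diagonal node degree matrix `D_V ∈ ℝ^{nd×nd}` (viewed as a complex matrix). -/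
def DVmat (T Hd : E → Finset V) (F : V → E → Matrix (Fin d) (Fin d) ℝ) :
    Matrix (V × Fin d) (V × Fin d) ℂ :=
  Matrix.of fun p r => if p.1 = r.1 then ((Dblk T Hd F p.1 p.2 r.2 : ℝ) : ℂ) else 0

/-- The Directed Sheaf Hypergraph Laplacian `L = D_V − B^{(q)†} D_E^{-1} B^{(q)}`. -/
def Lap (T Hd : E → Finset V) (q : ℝ) (F : V → E → Matrix (Fin d) (Fin d) ℝ) :
    Matrix (V × Fin d) (V × Fin d) ℂ :=
  DVmat T Hd F - (Bmat T Hd q F)ᴴ * DEinv T Hd d * Bmat T Hd q F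

/-- The block diagonal matrix with blocks `(R u)⁻¹`; when `R u` is the positive square root
of `D_u`, this is `D_V^{-1/2}`. -/
def Pinv (R : V → Matrix (Fin d) (Fin d) ℂ) : Matrix (V × Fin d) (V × Fin d) ℂ :=
  Matrix.of fun p r => if p.1 = r.1 then (R p.1)⁻¹ p.2 r.2 else 0

/-- The Normalized Directed Sheaf Hypergraph Laplacian `L_N = D_V^{-1/2} L D_V^{-1/2}`. -/
def LapN (T Hd : E → Finset V) (q : ℝ) (F : V → E → Matrix (Fin d) (Fin d) ℝ)
    (R : V → Matrix (Fin d) (Fin d) ℂ) : Matrix (V × Fin d) (V × Fin d) ℂ :=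
  Pinv R * Lap T Hd q F * Pinv R


set_option linter.unusedSectionVars false

lemma polar {V' : Type*} [DecidableEq V'] (s : Finset V') (f : V' → ℂ) :
    ∑ u ∈ s, ∑ v ∈ s, (f u - f v) * starRingEnd ℂ (f u - f v)
      = 2 * s.card * ∑ u ∈ s, f u * starRingEnd ℂ (f u)
        - 2 * ((∑ u ∈ s, f u) * starRingEnd ℂ (∑ u ∈ s, f u)) := by
  have h : ∀ u ∈ s, ∑ v ∈ s, (f u - f v) * starRingEnd ℂ (f u - f v)
      = s.card * (f u * starRingEnd ℂ (f u)) + ∑ v ∈ s, f v * starRingEnd ℂ (f v)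
        - f u * starRingEnd ℂ (∑ v ∈ s, f v) - (∑ v ∈ s, f v) * starRingEnd ℂ (f u) := by
    intro u hu
    simp only [sub_mul, mul_sub, map_sub, map_sum, Finset.sum_sub_distrib,
      Finset.sum_const, nsmul_eq_mul, Finset.mul_sum, Finset.sum_mul]
    ring
  rw [Finset.sum_congr rfl h]
  simp only [Finset.sum_sub_distrib, Finset.sum_add_distrib, Finset.sum_const, nsmul_eq_mul,
    ← Finset.sum_mul, ← Finset.mul_sum, map_sum]
  ring

lemma edge_identity (s : Finset V) (hs : s.Nonempty) (y : V → Fin d → ℂ) :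
    (∑ u ∈ s, ∑ i : Fin d, y u i * starRingEnd ℂ (y u i))
      - (s.card : ℂ)⁻¹ * ∑ i : Fin d,
          (∑ u ∈ s, y u i) * starRingEnd ℂ (∑ u ∈ s, y u i)
    = (1 / 2) * (s.card : ℂ)⁻¹ * ∑ u ∈ s, ∑ v ∈ s, ∑ i : Fin d,
        (y u i - y v i) * starRingEnd ℂ (y u i - y v i) := by
  have hc : (s.card : ℂ) ≠ 0 := Nat.cast_ne_zero.mpr (Finset.card_ne_zero.mpr hs)
  have h1 : ∑ u ∈ s, ∑ v ∈ s, ∑ i : Fin d,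
        (y u i - y v i) * starRingEnd ℂ (y u i - y v i)
      = ∑ i : Fin d, ∑ u ∈ s, ∑ v ∈ s,
        (y u i - y v i) * starRingEnd ℂ (y u i - y v i) :=
    (Finset.sum_congr rfl fun u _ => Finset.sum_comm).trans Finset.sum_comm
  rw [h1, Finset.sum_comm (s := s)]
  simp only [fun i => polar s (fun u => y u i)]
  simp only [Finset.mul_sum]
  rw [← Finset.sum_sub_distrib]
  refine Finset.sum_congr rfl fun i _ => ?_
  rw [← Finset.mul_sum]
  field_simp

lemma aux_swap {E' : Type*} (s : Finset E') (A : E' → Fin d → Fin d → ℂ) (xv : Fin d → ℂ)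
    (hA : ∀ e k j, starRingEnd ℂ (A e k j) = A e k j) :
    ∑ i : Fin d, starRingEnd ℂ (xv i) * ∑ j : Fin d,
        (∑ e ∈ s, ∑ k : Fin d, A e k i * A e k j) * xv j
      = ∑ e ∈ s, ∑ k : Fin d,
          starRingEnd ℂ (∑ j : Fin d, A e k j * xv j) * (∑ j : Fin d, A e k j * xv j) := by
  simp only [map_sum, _root_.map_mul, hA]
  simp only [← Finset.sum_product']
  simp only [Finset.sum_mul, Finset.mul_sum]
  conv_lhs => enter [2, i]; rw [Finset.sum_comm]
  rw [Finset.sum_comm]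
  refine Finset.sum_congr rfl fun p _ => ?_
  rw [Finset.sum_comm]
  refine Finset.sum_congr rfl fun i _ => ?_
  refine Finset.sum_congr rfl fun j _ => ?_
  ring

lemma dirS_unit (T Hd : E → Finset V) (q : ℝ) (e : E) (u : V) (hu : u ∈ everts T Hd e) :
    dirS T Hd q e u * starRingEnd ℂ (dirS T Hd q e u) = 1 := by
  unfold dirS
  by_cases hH : u ∈ Hd e
  · simp [hH]
  · have h : u ∈ T e := by
      rcases Finset.mem_union.mp hu with h | h
      · exact h
      · exact absurd h hH
    simp only [hH, if_false, h, if_true]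
    have h1 : ‖Complex.exp (-(2 * (Real.pi : ℂ) * (q : ℂ)) * Complex.I)‖ = 1 := by
      rw [show (-(2 * (Real.pi : ℂ) * (q : ℂ))) = ((-(2 * Real.pi * q) : ℝ) : ℂ) from by
        push_cast; ring]
      exact Complex.norm_exp_ofReal_mul_I _
    rw [Complex.mul_conj, Complex.normSq_eq_norm_sq, h1]
    norm_num

lemma swap_sum (T Hd : E → Finset V) (f : V → E → ℂ) :
    ∑ u : V, ∑ e ∈ Finset.univ.filter (fun e => u ∈ everts T Hd e), f u e
      = ∑ e : E, ∑ u ∈ everts T Hd e, f u e := by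
  simp only [Finset.sum_filter]
  rw [Finset.sum_comm]
  refine Finset.sum_congr rfl fun e _ => ?_
  rw [Finset.sum_ite_mem, Finset.univ_inter]

lemma Bterm (T Hd : E → Finset V) (q : ℝ) (F : V → E → Matrix (Fin d) (Fin d) ℝ)
    (x : V × Fin d → ℂ) :
    star x ⬝ᵥ (((Bmat T Hd q F)ᴴ * DEinv T Hd d * Bmat T Hd q F) *ᵥ x)
      = ∑ e : E, ((edeg T Hd e : ℂ))⁻¹ *
          ∑ i : Fin d, (Bmat T Hd q F *ᵥ x) (e, i) *
            starRingEnd ℂ ((Bmat T Hd q F *ᵥ x) (e, i)) := by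
  set B := Bmat T Hd q F
  set z := B *ᵥ x with hz
  rw [Matrix.mul_assoc, ← Matrix.mulVec_mulVec, Matrix.dotProduct_mulVec,
    ← Matrix.star_mulVec, ← Matrix.mulVec_mulVec, ← hz]
  simp only [DEinv, Matrix.mulVec_diagonal, dotProduct, Pi.star_apply, RCLike.star_def]
  rw [Fintype.sum_prod_type]
  refine Finset.sum_congr rfl fun e _ => ?_
  rw [Finset.mul_sum]
  refine Finset.sum_congr rfl fun i _ => ?_
  ring

lemma zcoord (T Hd : E → Finset V) (q : ℝ) (F : V → E → Matrix (Fin d) (Fin d) ℝ)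
    (x : V × Fin d → ℂ) (e : E) (i : Fin d) :
    (Bmat T Hd q F *ᵥ x) (e, i)
      = ∑ u ∈ everts T Hd e, (Fdir T Hd q F u e *ᵥ fun k => x (u, k)) i := by
  simp only [Matrix.mulVec, dotProduct, Bmat, Matrix.of_apply]
  rw [Fintype.sum_prod_type]
  have : ∀ u : V, ∑ j : Fin d, (if u ∈ everts T Hd e then Fdir T Hd q F u e i j else 0) * x (u, j)
      = if u ∈ everts T Hd e then ∑ j : Fin d, Fdir T Hd q F u e i j * x (u, j) else 0 := by
    intro u; split <;> simp
  rw [Finset.sum_congr rfl fun u _ => this u, Finset.sum_ite_mem, Finset.univ_inter]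

lemma DVterm (T Hd : E → Finset V) (F : V → E → Matrix (Fin d) (Fin d) ℝ)
    (x : V × Fin d → ℂ) :
    star x ⬝ᵥ (DVmat T Hd F *ᵥ x)
      = ∑ u : V, ∑ e ∈ Finset.univ.filter (fun e => u ∈ everts T Hd e), ∑ k : Fin d,
          starRingEnd ℂ (∑ j : Fin d, ((F u e k j : ℝ) : ℂ) * x (u, j)) *
            (∑ j : Fin d, ((F u e k j : ℝ) : ℂ) * x (u, j)) := by
  simp only [dotProduct, Matrix.mulVec, DVmat, Matrix.of_apply, Pi.star_apply,
    RCLike.star_def]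
  rw [Fintype.sum_prod_type]
  refine Finset.sum_congr rfl fun u _ => ?_
  have hin : ∀ i : Fin d, (∑ p : V × Fin d,
      (if u = p.1 then ((Dblk T Hd F u i p.2 : ℝ) : ℂ) else 0) * x p)
      = ∑ j : Fin d, ((Dblk T Hd F u i j : ℝ) : ℂ) * x (u, j) := by
    intro i
    rw [Fintype.sum_prod_type]
    simp [ite_mul, zero_mul, Finset.sum_ite_eq]
  simp only [hin]
  have hD : ∀ i j : Fin d, ((Dblk T Hd F u i j : ℝ) : ℂ)
      = ∑ e ∈ Finset.univ.filter (fun e => u ∈ everts T Hd e), ∑ k : Fin d,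
          ((F u e k i : ℝ) : ℂ) * ((F u e k j : ℝ) : ℂ) := by
    intro i j
    simp only [Dblk, Matrix.sum_apply, Matrix.mul_apply, Matrix.transpose_apply]
    push_cast
    rfl
  simp only [hD]
  exact aux_swap _ _ _ (fun e k j => Complex.conj_ofReal _)

lemma gy (T Hd : E → Finset V) (q : ℝ) (F : V → E → Matrix (Fin d) (Fin d) ℝ)
    (x : V × Fin d → ℂ) (u : V) (e : E) (hu : u ∈ everts T Hd e) :
    ∑ k : Fin d, starRingEnd ℂ (∑ j : Fin d, ((F u e k j : ℝ) : ℂ) * x (u, j)) *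
        (∑ j : Fin d, ((F u e k j : ℝ) : ℂ) * x (u, j))
      = ∑ i : Fin d, (Fdir T Hd q F u e *ᵥ fun k => x (u, k)) i *
          starRingEnd ℂ ((Fdir T Hd q F u e *ᵥ fun k => x (u, k)) i) := by
  refine Finset.sum_congr rfl fun k _ => ?_
  have hy : (Fdir T Hd q F u e *ᵥ fun k => x (u, k)) k
      = dirS T Hd q e u * ∑ j : Fin d, ((F u e k j : ℝ) : ℂ) * x (u, j) := by
    simp [Fdir, Matrix.smul_mulVec, Matrix.mulVec, dotProduct, Matrix.map_apply,
      Finset.mul_sum, mul_assoc]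
  rw [hy, _root_.map_mul]
  set g := ∑ j : Fin d, ((F u e k j : ℝ) : ℂ) * x (u, j)
  set c := dirS T Hd q e u
  have h1 : c * starRingEnd ℂ c = 1 := dirS_unit T Hd q e u hu
  calc starRingEnd ℂ g * g = (c * starRingEnd ℂ c) * (g * starRingEnd ℂ g) := by
        rw [h1]; ring
    _ = c * g * (starRingEnd ℂ c * starRingEnd ℂ g) := by ring

/-- Quadratic form of the (unnormalized) Directed Sheaf Hypergraph Laplacian:
`x† L x = (1/2) Σ_e (1/δ_e) Σ_{u,v∈e, u≠v} ‖F⃗_{u⊴e} x_u − F⃗_{v⊴e} x_v‖²`;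
in particular `L` is Hermitian and positive semidefinite. -/
theorem directed_sheaf_laplacian_quadratic_form
    (T Hd : E → Finset V) (q : ℝ) (F : V → E → Matrix (Fin d) (Fin d) ℝ)
    (hd : 0 < d)
    (hdisj : ∀ e, Disjoint (T e) (Hd e))
    (hne : ∀ e, (everts T Hd e).Nonempty) :
    (∀ x : V × Fin d → ℂ,
      star x ⬝ᵥ (Lap T Hd q F *ᵥ x) =
        ((((1 : ℝ) / 2) * ∑ e : E, ((edeg T Hd e : ℝ))⁻¹ *
          ∑ u ∈ everts T Hd e, ∑ v ∈ (everts T Hd e).erase u,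
            ∑ i : Fin d, Complex.normSq
              ((Fdir T Hd q F u e *ᵥ fun k => x (u, k)) i -
               (Fdir T Hd q F v e *ᵥ fun k => x (v, k)) i) : ℝ) : ℂ)) ∧
    (Lap T Hd q F).IsHermitian ∧ (Lap T Hd q F).PosSemidef := by
  have hquad : ∀ x : V × Fin d → ℂ,
      star x ⬝ᵥ (Lap T Hd q F *ᵥ x) =
        ((((1 : ℝ) / 2) * ∑ e : E, ((edeg T Hd e : ℝ))⁻¹ *
          ∑ u ∈ everts T Hd e, ∑ v ∈ (everts T Hd e).erase u,
            ∑ i : Fin d, Complex.normSq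
              ((Fdir T Hd q F u e *ᵥ fun k => x (u, k)) i -
               (Fdir T Hd q F v e *ᵥ fun k => x (v, k)) i) : ℝ) : ℂ) := by
    intro x
    set y : E → V → Fin d → ℂ := fun e u => Fdir T Hd q F u e *ᵥ fun k => x (u, k) with hy
    -- LHS
    rw [Lap, Matrix.sub_mulVec, dotProduct_sub, DVterm, Bterm]
    rw [swap_sum T Hd]
    have h1 : ∀ e ∈ (Finset.univ : Finset E),
        ∑ u ∈ everts T Hd e, ∑ k : Fin d,
          starRingEnd ℂ (∑ j : Fin d, ((F u e k j : ℝ) : ℂ) * x (u, j)) *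
            (∑ j : Fin d, ((F u e k j : ℝ) : ℂ) * x (u, j))
        = ∑ u ∈ everts T Hd e, ∑ i : Fin d, y e u i * starRingEnd ℂ (y e u i) :=
      fun e _ => Finset.sum_congr rfl fun u hu => gy T Hd q F x u e hu
    rw [Finset.sum_congr rfl h1]
    simp only [zcoord]
    rw [← Finset.sum_sub_distrib]
    have h2 : ∀ e ∈ (Finset.univ : Finset E),
        (∑ u ∈ everts T Hd e, ∑ i : Fin d, y e u i * starRingEnd ℂ (y e u i))
          - ((edeg T Hd e : ℂ))⁻¹ * ∑ i : Fin d,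
              (∑ u ∈ everts T Hd e, y e u i) *
                starRingEnd ℂ (∑ u ∈ everts T Hd e, y e u i)
        = (1 / 2) * ((edeg T Hd e : ℂ))⁻¹ *
            ∑ u ∈ everts T Hd e, ∑ v ∈ everts T Hd e, ∑ i : Fin d,
              (y e u i - y e v i) * starRingEnd ℂ (y e u i - y e v i) := by
      intro e _
      exact edge_identity (everts T Hd e) (hne e) (y e)
    rw [Finset.sum_congr rfl h2]
    -- RHS
    have herase : ((((1 : ℝ) / 2) * ∑ e : E, ((edeg T Hd e : ℝ))⁻¹ *
          ∑ u ∈ everts T Hd e, ∑ v ∈ (everts T Hd e).erase u,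
            ∑ i : Fin d, Complex.normSq (y e u i - y e v i) : ℝ))
        = (((1 : ℝ) / 2) * ∑ e : E, ((edeg T Hd e : ℝ))⁻¹ *
          ∑ u ∈ everts T Hd e, ∑ v ∈ everts T Hd e,
            ∑ i : Fin d, Complex.normSq (y e u i - y e v i) : ℝ) := by
      refine congrArg _ (Finset.sum_congr rfl fun e _ => congrArg _
        (Finset.sum_congr rfl fun u hu => ?_))
      exact Finset.sum_erase _ (by simp)
    rw [herase]
    push_cast
    simp only [← Complex.mul_conj]
    rw [Finset.mul_sum]
    refine Finset.sum_congr rfl fun e _ => ?_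
    ring
  have hherm : (Lap T Hd q F).IsHermitian := by
    have hsym : ∀ u i j, Dblk T Hd F u i j = Dblk T Hd F u j i := by
      intro u i j
      simp only [Dblk, Matrix.sum_apply, Matrix.mul_apply, Matrix.transpose_apply]
      exact Finset.sum_congr rfl fun e _ => Finset.sum_congr rfl fun k _ => mul_comm _ _
    have hDV : (DVmat T Hd F).IsHermitian := by
      ext p r
      simp only [Matrix.conjTranspose_apply, DVmat, Matrix.of_apply]
      by_cases h : p.1 = r.1
      · simp [h, Complex.conj_ofReal, hsym]
      · rw [if_neg (fun hh => h hh.symm), if_neg h, star_zero]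
    have hDE : (DEinv T Hd d).IsHermitian := by
      rw [Matrix.IsHermitian, DEinv, Matrix.diagonal_conjTranspose]
      have hst : (star fun p : E × Fin d => ((edeg T Hd p.1 : ℂ))⁻¹)
          = fun p : E × Fin d => ((edeg T Hd p.1 : ℂ))⁻¹ := by
        funext p
        show star (((edeg T Hd p.1 : ℂ))⁻¹) = ((edeg T Hd p.1 : ℂ))⁻¹
        rw [star_inv₀, star_natCast]
      rw [hst]
    exact hDV.sub (Matrix.isHermitian_conjTranspose_mul_mul _ hDE)
  refine ⟨hquad, hherm, Matrix.PosSemidef.of_dotProduct_mulVec_nonneg hherm fun x => ?_⟩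
  rw [hquad x]
  refine Complex.zero_le_real.mpr ?_
  have h0 : (0:ℝ) ≤ ∑ e : E, ((edeg T Hd e : ℝ))⁻¹ *
      ∑ u ∈ everts T Hd e, ∑ v ∈ (everts T Hd e).erase u,
        ∑ i : Fin d, Complex.normSq
          ((Fdir T Hd q F u e *ᵥ fun k => x (u, k)) i -
           (Fdir T Hd q F v e *ᵥ fun k => x (v, k)) i) := by
    refine Finset.sum_nonneg fun e _ => mul_nonneg (inv_nonneg.mpr (Nat.cast_nonneg _)) ?_
    refine Finset.sum_nonneg fun u _ => Finset.sum_nonneg fun v _ =>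
      Finset.sum_nonneg fun i _ => Complex.normSq_nonneg _
  linarith

end
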